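/- arXiv:2408.01555 — 6 statements merged into one kernel-verified Lean document; each statement's English description precedes it below -/
import Mathlib

section
/- Let n ≥ 1, let X_1,…,X_n be independent real-valued random variables on a probability space, and set S_0 = 0 and S_k = X_1 + … + X_k for 1 ≤ k ≤ n. Let f : {0,…,n} → ℝ, let t₀ ∈ {0,…,n}, and let z₁, z₂, x₀ ∈ ℝ. Then P( (∀ k ∈ {0,…,n}: z₁ + S_k + f(k) ≥ 0) and z₁ + S_n + f(n) ∈ [z₂ − 1, z₂] ) ≥ P( (∀ k ∈ {0,…,t₀}: (z₁ − 1) + S_k + f(k) ≥ 0) and (z₁ − 1) + S_{t₀} + f(t₀) ∈ [x₀ + f(t₀) − 1, x₀ + f(t₀)] ) · inf_{x ∈ [x₀, x₀ + 1]} P( (∀ k ∈ {t₀,…,n}: x + (S_k − S_{t₀}) + f(k) ≥ 0) and x + (S_n − S_{t₀}) + f(n) ∈ [z₂ − 1, z₂] ). -/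
open MeasureTheory ProbabilityTheory

noncomputable section

/-- Partial sum of the first `k` coordinates of a vector in `Fin t → ℝ`. -/
def pSum (t : ℕ) (y : Fin t → ℝ) (k : ℕ) : ℝ :=
  ∑ j ∈ Finset.range k, if h : j < t then y ⟨j, h⟩ else 0

lemma measurable_pSum (t k : ℕ) : Measurable fun y : Fin t → ℝ => pSum t y k := by
  unfold pSum
  refine Finset.measurable_sum _ fun j _ => ?_
  by_cases h : j < t
  · simpa [h] using measurable_pi_apply (⟨j, h⟩ : Fin t)
  · simpa [h] using measurable_const

lemma pSum_eq (t : ℕ) (w : ℕ → ℝ) {k : ℕ} (hk : k ≤ t) :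
    pSum t (fun i : Fin t => w i) k = ∑ j ∈ Finset.range k, w j := by
  unfold pSum
  refine Finset.sum_congr rfl fun j hj => ?_
  rw [Finset.mem_range] at hj
  rw [dif_pos (lt_of_lt_of_le hj hk)]

end

/-- Barrier-splitting lemma (discrete, independent increments):
the probability of staying above the barrier `-f` on `{0,…,n}` starting at `z₁`
and landing in `[z₂-1, z₂]` is at least the product of the barrier probability
on `{0,…,t₀}` (starting at `z₁ - 1`, landing in `[x₀ + f t₀ - 1, x₀ + f t₀]`)
and the infimum over starting heights `x ∈ [x₀, x₀+1]` of the barrier probability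
for the increments on `{t₀,…,n}`. -/
theorem barrier_split
    {Ω : Type*} [MeasurableSpace Ω] (μ : Measure Ω) [IsProbabilityMeasure μ]
    (n : ℕ) (hn : 1 ≤ n) (X : ℕ → Ω → ℝ)
    (hmeas : ∀ j, Measurable (X j))
    (hindep : iIndepFun (fun j : Fin n => X j) μ)
    (f : ℕ → ℝ) (t₀ : ℕ) (ht₀ : t₀ ≤ n) (z₁ z₂ x₀ : ℝ) :
    μ {ω | (∀ k ≤ n, 0 ≤ z₁ + (∑ j ∈ Finset.range k, X j ω) + f k) ∧
        z₁ + (∑ j ∈ Finset.range n, X j ω) + f n ∈ Set.Icc (z₂ - 1) z₂}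
      ≥ μ {ω | (∀ k ≤ t₀, 0 ≤ (z₁ - 1) + (∑ j ∈ Finset.range k, X j ω) + f k) ∧
            (z₁ - 1) + (∑ j ∈ Finset.range t₀, X j ω) + f t₀
              ∈ Set.Icc (x₀ + f t₀ - 1) (x₀ + f t₀)}
        * ⨅ x : Set.Icc x₀ (x₀ + 1),
            μ {ω | (∀ k, t₀ ≤ k → k ≤ n →
                0 ≤ (x : ℝ) + ((∑ j ∈ Finset.range k, X j ω)
                  - ∑ j ∈ Finset.range t₀, X j ω) + f k) ∧
              (x : ℝ) + ((∑ j ∈ Finset.range n, X j ω)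
                  - ∑ j ∈ Finset.range t₀, X j ω) + f n ∈ Set.Icc (z₂ - 1) z₂} := by
  classical
  set m := n - t₀ with hm
  have htm : t₀ + m = n := Nat.add_sub_cancel' ht₀
  -- block maps
  set Y : Ω → (Fin t₀ → ℝ) := fun ω i => X i ω with hY
  set Z : Ω → (Fin m → ℝ) := fun ω i => X (t₀ + i) ω with hZ
  have hYmeas : Measurable Y := measurable_pi_lambda _ fun i => hmeas i
  have hZmeas : Measurable Z := measurable_pi_lambda _ fun i => hmeas _
  -- independence of the two blocks
  have hind : IndepFun Y Z μ := by
    set S : Finset (Fin n) := Finset.univ.filter (fun i => (i : ℕ) < t₀) with hS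
    set T : Finset (Fin n) := Finset.univ.filter (fun i => t₀ ≤ (i : ℕ)) with hT
    have hdisj : Disjoint S T := by
      rw [Finset.disjoint_left]
      intro a ha hb
      simp only [hS, hT, Finset.mem_filter] at ha hb
      omega
    have h0 := hindep.indepFun_finset S T hdisj (fun i => hmeas i)
    have φmeas : Measurable fun (v : {i : Fin n // i ∈ S} → ℝ) (i : Fin t₀) =>
        v ⟨⟨i, lt_of_lt_of_le i.2 ht₀⟩, by simp [hS]⟩ :=
      measurable_pi_lambda _ fun i => measurable_pi_apply _
    have ψmeas : Measurable fun (v : {i : Fin n // i ∈ T} → ℝ) (i : Fin m) =>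
        v ⟨⟨t₀ + i, by omega⟩, by simp [hT]⟩ :=
      measurable_pi_lambda _ fun i => measurable_pi_apply _
    exact h0.comp φmeas ψmeas
  -- key sum identities
  have sum1 : ∀ (ω : Ω) (k : ℕ), k ≤ t₀ →
      pSum t₀ (Y ω) k = ∑ j ∈ Finset.range k, X j ω := fun ω k hk =>
    pSum_eq t₀ (fun j => X j ω) hk
  have sum2 : ∀ (ω : Ω) (k : ℕ), k ≤ m →
      pSum m (Z ω) k = (∑ j ∈ Finset.range (t₀ + k), X j ω)
        - ∑ j ∈ Finset.range t₀, X j ω := by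
    intro ω k hk
    have h1 : pSum m (Z ω) k = ∑ j ∈ Finset.range k, X (t₀ + j) ω :=
      pSum_eq m (fun j => X (t₀ + j) ω) hk
    have h2 := Finset.sum_Ico_consecutive (fun j => X j ω)
      (Nat.zero_le t₀) (Nat.le_add_right t₀ k)
    have h3 : ∑ j ∈ Finset.Ico t₀ (t₀ + k), X j ω
        = ∑ j ∈ Finset.range k, X (t₀ + j) ω := by
      rw [Finset.sum_Ico_eq_sum_range]; simp
    simp only [← Finset.range_eq_Ico, h3] at h2
    rw [h1]; linarith [h2]
  -- sets
  set A : Set (Fin t₀ → ℝ) :=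
    {y | (∀ k ≤ t₀, 0 ≤ (z₁ - 1) + pSum t₀ y k + f k) ∧
      (z₁ - 1) + pSum t₀ y t₀ + f t₀ ∈ Set.Icc (x₀ + f t₀ - 1) (x₀ + f t₀)} with hA
  set C : ℝ → Set (Fin m → ℝ) := fun x =>
    {z | (∀ k ≤ m, 0 ≤ x + pSum m z k + f (t₀ + k)) ∧
      x + pSum m z m + f (t₀ + m) ∈ Set.Icc (z₂ - 1) z₂} with hC
  set D : Set ((Fin t₀ → ℝ) × (Fin m → ℝ)) :=
    {p | p.1 ∈ A ∧ p.2 ∈ C (z₁ + pSum t₀ p.1 t₀)} with hD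
  have hAmeas : MeasurableSet A := by
    rw [hA]
    have h1 : MeasurableSet {y : Fin t₀ → ℝ | ∀ k ≤ t₀, 0 ≤ (z₁ - 1) + pSum t₀ y k + f k} := by
      have he : {y : Fin t₀ → ℝ | ∀ k ≤ t₀, 0 ≤ (z₁ - 1) + pSum t₀ y k + f k}
          = ⋂ k ∈ Set.Iic t₀, {y | 0 ≤ (z₁ - 1) + pSum t₀ y k + f k} := by
        ext y; simp [Set.mem_iInter]
      rw [he]
      exact MeasurableSet.biInter (Set.to_countable _) fun k _ =>
        measurableSet_le measurable_const
          ((measurable_const.add (measurable_pSum t₀ k)).add measurable_const)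
    exact h1.inter
      (((measurable_const.add (measurable_pSum t₀ t₀)).add measurable_const) measurableSet_Icc)
  have hCmeas : ∀ x : ℝ, MeasurableSet (C x) := by
    intro x
    rw [hC]
    have h1 : MeasurableSet {z : Fin m → ℝ | ∀ k ≤ m, 0 ≤ x + pSum m z k + f (t₀ + k)} := by
      have he : {z : Fin m → ℝ | ∀ k ≤ m, 0 ≤ x + pSum m z k + f (t₀ + k)}
          = ⋂ k ∈ Set.Iic m, {z | 0 ≤ x + pSum m z k + f (t₀ + k)} := by
        ext z; simp [Set.mem_iInter]
      rw [he]
      exact MeasurableSet.biInter (Set.to_countable _) fun k _ =>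
        measurableSet_le measurable_const
          ((measurable_const.add (measurable_pSum m k)).add measurable_const)
    exact h1.inter
      (((measurable_const.add (measurable_pSum m m)).add measurable_const) measurableSet_Icc)
  have hDmeas : MeasurableSet D := by
    have hjoint : MeasurableSet {q : ℝ × (Fin m → ℝ) | q.2 ∈ C q.1} := by
      have h1 : MeasurableSet {q : ℝ × (Fin m → ℝ) |
          ∀ k ≤ m, 0 ≤ q.1 + pSum m q.2 k + f (t₀ + k)} := by
        have he : {q : ℝ × (Fin m → ℝ) | ∀ k ≤ m, 0 ≤ q.1 + pSum m q.2 k + f (t₀ + k)}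
            = ⋂ k ∈ Set.Iic m, {q : ℝ × (Fin m → ℝ) | 0 ≤ q.1 + pSum m q.2 k + f (t₀ + k)} := by
          ext q; simp [Set.mem_iInter]
        rw [he]
        exact MeasurableSet.biInter (Set.to_countable _) fun k _ =>
          measurableSet_le measurable_const
            ((measurable_fst.add ((measurable_pSum m k).comp measurable_snd)).add
              measurable_const)
      have h2 : MeasurableSet {q : ℝ × (Fin m → ℝ) |
          q.1 + pSum m q.2 m + f (t₀ + m) ∈ Set.Icc (z₂ - 1) z₂} :=
        ((measurable_fst.add ((measurable_pSum m m).comp measurable_snd)).add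
          measurable_const) measurableSet_Icc
      have he2 : {q : ℝ × (Fin m → ℝ) | q.2 ∈ C q.1}
          = {q : ℝ × (Fin m → ℝ) | ∀ k ≤ m, 0 ≤ q.1 + pSum m q.2 k + f (t₀ + k)}
            ∩ {q : ℝ × (Fin m → ℝ) |
                q.1 + pSum m q.2 m + f (t₀ + m) ∈ Set.Icc (z₂ - 1) z₂} := by
        ext q; simp [hC, Set.mem_setOf_eq]
      rw [he2]; exact h1.inter h2
    have he3 : D = Prod.fst ⁻¹' A
        ∩ (fun p : (Fin t₀ → ℝ) × (Fin m → ℝ) => (z₁ + pSum t₀ p.1 t₀, p.2))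
          ⁻¹' {q : ℝ × (Fin m → ℝ) | q.2 ∈ C q.1} := by
      ext p; simp [hD, Set.mem_setOf_eq]
    rw [he3]
    exact (measurable_fst hAmeas).inter
      (((measurable_const.add ((measurable_pSum t₀ t₀).comp measurable_fst)).prodMk
        measurable_snd) hjoint)
  -- second-segment event as preimage under Z
  have setC : ∀ x : ℝ,
      {ω | (∀ k, t₀ ≤ k → k ≤ n →
          0 ≤ x + ((∑ j ∈ Finset.range k, X j ω) - ∑ j ∈ Finset.range t₀, X j ω) + f k) ∧
        x + ((∑ j ∈ Finset.range n, X j ω) - ∑ j ∈ Finset.range t₀, X j ω) + f n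
          ∈ Set.Icc (z₂ - 1) z₂} = Z ⁻¹' C x := by
    intro x
    ext ω
    simp only [Set.mem_setOf_eq, Set.mem_preimage, hC, Set.mem_Icc]
    constructor
    · rintro ⟨h1, h2⟩
      refine ⟨fun k hk => ?_, ?_⟩
      · rw [sum2 ω k hk]
        exact h1 (t₀ + k) (Nat.le_add_right _ _) (by omega)
      · rw [sum2 ω m le_rfl, htm]
        exact h2
    · rintro ⟨h1, h2⟩
      constructor
      · intro k hk1 hk2
        have h := h1 (k - t₀) (by omega)
        rw [sum2 ω (k - t₀) (by omega)] at h
        have e : t₀ + (k - t₀) = k := by omega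
        rwa [e] at h
      · rwa [sum2 ω m le_rfl, htm] at h2
  -- first-segment event as preimage under Y
  have setA : {ω | (∀ k ≤ t₀, 0 ≤ (z₁ - 1) + (∑ j ∈ Finset.range k, X j ω) + f k) ∧
        (z₁ - 1) + (∑ j ∈ Finset.range t₀, X j ω) + f t₀
          ∈ Set.Icc (x₀ + f t₀ - 1) (x₀ + f t₀)} = Y ⁻¹' A := by
    ext ω
    simp only [Set.mem_setOf_eq, Set.mem_preimage, hA, Set.mem_Icc]
    constructor
    · rintro ⟨h1, h2⟩
      refine ⟨fun k hk => ?_, ?_⟩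
      · rw [sum1 ω k hk]; exact h1 k hk
      · rwa [sum1 ω t₀ le_rfl]
    · rintro ⟨h1, h2⟩
      refine ⟨fun k hk => ?_, ?_⟩
      · have := h1 k hk; rwa [sum1 ω k hk] at this
      · rwa [sum1 ω t₀ le_rfl] at h2
  -- the preimage of D is contained in the target event
  have hsub : (fun ω => (Y ω, Z ω)) ⁻¹' D ⊆
      {ω | (∀ k ≤ n, 0 ≤ z₁ + (∑ j ∈ Finset.range k, X j ω) + f k) ∧
        z₁ + (∑ j ∈ Finset.range n, X j ω) + f n ∈ Set.Icc (z₂ - 1) z₂} := by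
    intro ω hω
    simp only [Set.mem_preimage, hD, Set.mem_setOf_eq, hA, hC, Set.mem_Icc] at hω
    obtain ⟨⟨hA1, hA2⟩, hC1, hC2⟩ := hω
    rw [sum1 ω t₀ le_rfl] at hA2 hC1 hC2
    simp only [Set.mem_setOf_eq, Set.mem_Icc]
    constructor
    · intro k hk
      rcases le_or_gt k t₀ with hkt | hkt
      · have := hA1 k hkt
        rw [sum1 ω k hkt] at this
        linarith
      · have h := hC1 (k - t₀) (by omega)
        rw [sum2 ω (k - t₀) (by omega)] at h
        have e : t₀ + (k - t₀) = k := by omega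
        rw [e] at h
        linarith
    · rw [sum2 ω m le_rfl, htm] at hC2
      constructor <;> linarith [hC2.1, hC2.2]
  -- the measure-theoretic chain
  set I := ⨅ x : Set.Icc x₀ (x₀ + 1),
      μ {ω | (∀ k, t₀ ≤ k → k ≤ n →
          0 ≤ (x : ℝ) + ((∑ j ∈ Finset.range k, X j ω) - ∑ j ∈ Finset.range t₀, X j ω) + f k) ∧
        (x : ℝ) + ((∑ j ∈ Finset.range n, X j ω) - ∑ j ∈ Finset.range t₀, X j ω) + f n
          ∈ Set.Icc (z₂ - 1) z₂} with hI
  have hmap : μ.map (fun ω => (Y ω, Z ω)) = (μ.map Y).prod (μ.map Z) :=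
    (indepFun_iff_map_prod_eq_prod_map_map hYmeas.aemeasurable hZmeas.aemeasurable).mp hind
  have : IsProbabilityMeasure (μ.map Z) := Measure.isProbabilityMeasure_map hZmeas.aemeasurable
  have e1 : μ ((fun ω => (Y ω, Z ω)) ⁻¹' D) = ((μ.map Y).prod (μ.map Z)) D := by
    rw [← hmap, Measure.map_apply (hYmeas.prodMk hZmeas) hDmeas]
  have e2 : ((μ.map Y).prod (μ.map Z)) D
      = ∫⁻ y, (μ.map Z) (Prod.mk y ⁻¹' D) ∂(μ.map Y) := Measure.prod_apply hDmeas
  -- pointwise lower bound on the slices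
  have hpt : ∀ y : Fin t₀ → ℝ,
      A.indicator (fun _ => I) y ≤ (μ.map Z) (Prod.mk y ⁻¹' D) := by
    intro y
    by_cases hy : y ∈ A
    · rw [Set.indicator_of_mem hy]
      have hx : z₁ + pSum t₀ y t₀ ∈ Set.Icc x₀ (x₀ + 1) := by
        obtain ⟨-, h2⟩ := hy
        rw [Set.mem_Icc] at h2 ⊢
        constructor <;> linarith [h2.1, h2.2]
      have hslice : Prod.mk y ⁻¹' D = C (z₁ + pSum t₀ y t₀) := by
        ext z
        simp only [Set.mem_preimage, hD, Set.mem_setOf_eq]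
        exact ⟨fun h => h.2, fun h => ⟨hy, h⟩⟩
      rw [hslice]
      have hle : I ≤ μ (Z ⁻¹' C (z₁ + pSum t₀ y t₀)) := by
        have := iInf_le (fun x : Set.Icc x₀ (x₀ + 1) =>
          μ {ω | (∀ k, t₀ ≤ k → k ≤ n →
              0 ≤ (x : ℝ) + ((∑ j ∈ Finset.range k, X j ω)
                - ∑ j ∈ Finset.range t₀, X j ω) + f k) ∧
            (x : ℝ) + ((∑ j ∈ Finset.range n, X j ω)
                - ∑ j ∈ Finset.range t₀, X j ω) + f n ∈ Set.Icc (z₂ - 1) z₂})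
          ⟨z₁ + pSum t₀ y t₀, hx⟩
        rw [← hI] at this
        rwa [setC (z₁ + pSum t₀ y t₀)] at this
      rw [Measure.map_apply hZmeas (hCmeas _)]
      exact hle
    · rw [Set.indicator_of_notMem hy]
      exact zero_le
  have e3 : ∫⁻ y, A.indicator (fun _ => I) y ∂(μ.map Y)
      ≤ ∫⁻ y, (μ.map Z) (Prod.mk y ⁻¹' D) ∂(μ.map Y) := lintegral_mono hpt
  have e4 : ∫⁻ y, A.indicator (fun _ => I) y ∂(μ.map Y) = I * (μ.map Y) A :=
    lintegral_indicator_const hAmeas I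
  have e5 : (μ.map Y) A = μ (Y ⁻¹' A) := Measure.map_apply hYmeas hAmeas
  calc μ {ω | (∀ k ≤ t₀, 0 ≤ (z₁ - 1) + (∑ j ∈ Finset.range k, X j ω) + f k) ∧
            (z₁ - 1) + (∑ j ∈ Finset.range t₀, X j ω) + f t₀
              ∈ Set.Icc (x₀ + f t₀ - 1) (x₀ + f t₀)} * I
      = I * μ (Y ⁻¹' A) := by rw [setA, mul_comm]
    _ = ∫⁻ y, A.indicator (fun _ => I) y ∂(μ.map Y) := by rw [e4, e5]
    _ ≤ ∫⁻ y, (μ.map Z) (Prod.mk y ⁻¹' D) ∂(μ.map Y) := e3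
    _ = μ ((fun ω => (Y ω, Z ω)) ⁻¹' D) := by rw [e1, e2]
    _ ≤ _ := measure_mono hsub
end

section
/- Let μ ∈ ℝ, σ > 0 and 0 ≤ α ≤ β. Then for every z ≥ μ: sup_{v ∈ [0, α]} g_{μ+v, σ²}(z) ≤ exp( β² / (2σ²) ) · inf_{v ∈ [α, β]} g_{μ+v, σ²}(z). -/
/-- The Gaussian density with mean `μ` and variance `σ2`. -/
noncomputable def gaussDensity (μ σ2 x : ℝ) : ℝ :=
  (Real.sqrt (2 * Real.pi * σ2))⁻¹ * Real.exp (-(x - μ) ^ 2 / (2 * σ2))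

lemma gauss_pointwise (μ σ α β z u w : ℝ) (hσ : 0 < σ) (hz : μ ≤ z)
    (hu0 : 0 ≤ u) (huw : u ≤ w) (hwβ : w ≤ β) :
    gaussDensity (μ + u) (σ ^ 2) z
      ≤ Real.exp (β ^ 2 / (2 * σ ^ 2)) * gaussDensity (μ + w) (σ ^ 2) z := by
  unfold gaussDensity
  rw [mul_left_comm, ← Real.exp_add]
  apply mul_le_mul_of_nonneg_left _ (by positivity)
  rw [Real.exp_le_exp]
  have hσ2 : (0:ℝ) < 2 * σ ^ 2 := by positivity
  rw [← add_div, div_le_div_iff_of_pos_right hσ2]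
  nlinarith [mul_nonneg (sub_nonneg.2 huw) (sub_nonneg.2 hz),
    mul_nonneg (sub_nonneg.2 huw) hu0,
    mul_nonneg (sub_nonneg.2 hwβ) (by linarith : (0:ℝ) ≤ β + w)]

/-- Gaussian density comparison: for `z ≥ μ`, among Gaussian densities with means
`μ + v`, the largest one with offset `v ∈ [0, α]` exceeds the smallest one with
offset `v ∈ [α, β]` by at most the factor `exp (β² / (2σ²))`. -/
theorem gaussian_density_mean_shift_comparison
    (μ σ α β z : ℝ) (hσ : 0 < σ) (hα : 0 ≤ α) (hαβ : α ≤ β) (hz : μ ≤ z) :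
    (⨆ v : Set.Icc (0 : ℝ) α, gaussDensity (μ + (v : ℝ)) (σ ^ 2) z)
      ≤ Real.exp (β ^ 2 / (2 * σ ^ 2)) *
        ⨅ v : Set.Icc α β, gaussDensity (μ + (v : ℝ)) (σ ^ 2) z := by
  have hne1 : Nonempty (Set.Icc (0 : ℝ) α) := ⟨⟨0, le_refl _, hα⟩⟩
  have hne2 : Nonempty (Set.Icc α β) := ⟨⟨α, le_refl _, hαβ⟩⟩
  have hE : (0:ℝ) < Real.exp (β ^ 2 / (2 * σ ^ 2)) := Real.exp_pos _
  apply ciSup_le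
  rintro ⟨u, hu0, huα⟩
  have h : gaussDensity (μ + u) (σ ^ 2) z * (Real.exp (β ^ 2 / (2 * σ ^ 2)))⁻¹
      ≤ ⨅ v : Set.Icc α β, gaussDensity (μ + (v : ℝ)) (σ ^ 2) z := by
    apply le_ciInf
    rintro ⟨w, hαw, hwβ⟩
    rw [mul_inv_le_iff₀ hE, mul_comm _ (Real.exp _)]
    exact gauss_pointwise μ σ α β z u w hσ hz hu0 (huα.trans hαw) hwβ
  calc gaussDensity (μ + u) (σ ^ 2) z
      = Real.exp (β ^ 2 / (2 * σ ^ 2)) *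
        (gaussDensity (μ + u) (σ ^ 2) z * (Real.exp (β ^ 2 / (2 * σ ^ 2)))⁻¹) := by
        field_simp
    _ ≤ _ := by exact mul_le_mul_of_nonneg_left h hE.le
end

section
/- For all constants 0 < c₁ ≤ C₁ and M > 0 there exist K > 0 and t₀ ≥ 3 such that for all t ≥ t₀, all σ² ∈ [c₁ t, C₁ t] and all μ ∈ ℝ with |μ| ≤ M·√(t·log t): ∫_0^{t^{1/3}} g_{μ,σ²}(z) dz ≤ K · t^{−1/15} · e^{(log t)^{2/3}} · ∫_{t^{1/3}}^{t^{2/5}} g_{μ,σ²}(z) dz. -/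
set_option maxHeartbeats 1000000 in
/-- Gaussian integral comparison: when the variance is of order `t` and the mean
is at most `M √(t log t)` in absolute value, the Gaussian mass of `[0, t^{1/3}]`
is at most `K t^{-1/15} e^{(log t)^{2/3}}` times the mass of `[t^{1/3}, t^{2/5}]`. -/
theorem gaussian_initial_segment_comparison
    (c₁ C₁ M : ℝ) (hc : 0 < c₁) (hcC : c₁ ≤ C₁) (hM : 0 < M) :
    ∃ K t₀ : ℝ, 0 < K ∧ 3 ≤ t₀ ∧
      ∀ t : ℝ, t₀ ≤ t → ∀ σ2 : ℝ, σ2 ∈ Set.Icc (c₁ * t) (C₁ * t) →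
      ∀ μ : ℝ, |μ| ≤ M * Real.sqrt (t * Real.log t) →
        (∫ z in (0 : ℝ)..(t ^ ((1 : ℝ) / 3)), gaussDensity μ σ2 z) ≤
          K * t ^ (-(1 : ℝ) / 15) * Real.exp ((Real.log t) ^ ((2 : ℝ) / 3)) *
            ∫ z in (t ^ ((1 : ℝ) / 3))..(t ^ ((2 : ℝ) / 5)), gaussDensity μ σ2 z := by
  -- the eventual smallness conditions
  have h1 : ∀ᶠ t : ℝ in Filter.atTop, t ^ (-(1 : ℝ) / 15) ≤ 1 / 2 := by
    have h := tendsto_rpow_neg_atTop (show (0:ℝ) < 1/15 by norm_num)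
    have h' := h.eventually_le_const (show (0:ℝ) < 1/2 by norm_num)
    refine h'.mono fun t ht => ?_
    rw [show -(1:ℝ)/15 = -(1/15) by norm_num]; exact ht
  have h2 : ∀ᶠ t : ℝ in Filter.atTop, t ^ (-(1 : ℝ) / 5) ≤ c₁ / 2 := by
    have h := tendsto_rpow_neg_atTop (show (0:ℝ) < 1/5 by norm_num)
    have h' := h.eventually_le_const (show (0:ℝ) < c₁/2 by positivity)
    refine h'.mono fun t ht => ?_
    rw [show -(1:ℝ)/5 = -(1/5) by norm_num]; exact ht
  have h3 : ∀ᶠ t : ℝ in Filter.atTop,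
      M * Real.sqrt 10 * t ^ (-(1 : ℝ) / 20) ≤ c₁ / 2 := by
    have h := tendsto_rpow_neg_atTop (show (0:ℝ) < 1/20 by norm_num)
    have h'' : Filter.Tendsto (fun t : ℝ => M * Real.sqrt 10 * t ^ (-(1/20 : ℝ)))
        Filter.atTop (nhds 0) := by
      simpa using h.const_mul (M * Real.sqrt 10)
    have h' := h''.eventually_le_const (show (0:ℝ) < c₁/2 by positivity)
    refine h'.mono fun t ht => ?_
    rw [show -(1:ℝ)/20 = -(1/20) by norm_num]; exact ht
  have h4 : ∀ᶠ t : ℝ in Filter.atTop, 1 ≤ Real.log t :=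
    Real.tendsto_log_atTop.eventually_ge_atTop 1
  obtain ⟨t₀, ht₀⟩ := Filter.eventually_atTop.mp
    (((h1.and h2).and (h3.and h4)).and (Filter.eventually_ge_atTop (3:ℝ)))
  refine ⟨2, max t₀ 3, by norm_num, le_max_right _ _, ?_⟩
  intro t ht σ2 hσ2 μ hμ
  obtain ⟨⟨⟨hs12, ht5⟩, ⟨ht20, hlog1⟩⟩, ht3⟩ := ht₀ t (le_trans (le_max_left _ _) ht)
  have ht0 : (0:ℝ) < t := by linarith
  have ht1 : (1:ℝ) ≤ t := by linarith
  set a := t ^ ((1:ℝ)/3) with ha_def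
  set b := t ^ ((2:ℝ)/5) with hb_def
  set s := t ^ (-(1:ℝ)/15) with hs_def
  have ha0 : 0 < a := Real.rpow_pos_of_pos ht0 _
  have hb0 : 0 < b := Real.rpow_pos_of_pos ht0 _
  have hs0 : 0 < s := Real.rpow_pos_of_pos ht0 _
  have hab : a = b * s := by
    rw [ha_def, hb_def, hs_def, ← Real.rpow_add ht0]; norm_num
  have haltb : a ≤ b / 2 * 1 := by
    rw [hab]
    calc b * s ≤ b * (1/2) := by
          exact mul_le_mul_of_nonneg_left hs12 hb0.le
      _ = b / 2 * 1 := by ring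
  have hba : b / 2 ≤ b - a := by linarith
  have hba0 : 0 < b - a := by linarith
  have hσ : 0 < σ2 := lt_of_lt_of_le (by positivity) hσ2.1
  have hcont : Continuous (gaussDensity μ σ2) := by
    unfold gaussDensity; fun_prop
  have hgnn : ∀ x : ℝ, 0 ≤ gaussDensity μ σ2 x := by
    intro x; unfold gaussDensity; positivity
  -- bound on b^2 + b * |μ|
  have hlog0 : (0:ℝ) ≤ Real.log t := by linarith
  have hb2 : b ^ 2 ≤ c₁ / 2 * t := by
    have : b ^ 2 = t ^ (-(1:ℝ)/5) * t := by
      rw [hb_def, ← Real.rpow_natCast (t ^ ((2:ℝ)/5)) 2, ← Real.rpow_mul ht0.le,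
        show ((2:ℝ)/5 * (2:ℕ) : ℝ) = -(1:ℝ)/5 + 1 by push_cast; norm_num,
        Real.rpow_add_one ht0.ne']
    rw [this]
    exact mul_le_mul_of_nonneg_right ht5 ht0.le
  have hsqrtlog : Real.sqrt (Real.log t) ≤ Real.sqrt 10 * t ^ ((1:ℝ)/20) := by
    have hlt : Real.log t ≤ 10 * t ^ ((1:ℝ)/10) := by
      have h := Real.log_le_sub_one_of_pos (Real.rpow_pos_of_pos ht0 ((1:ℝ)/10))
      rw [Real.log_rpow ht0] at h
      have hpos : 0 < t ^ ((1:ℝ)/10) := Real.rpow_pos_of_pos ht0 _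
      nlinarith
    calc Real.sqrt (Real.log t) ≤ Real.sqrt (10 * t ^ ((1:ℝ)/10)) :=
          Real.sqrt_le_sqrt hlt
      _ = Real.sqrt 10 * Real.sqrt (t ^ ((1:ℝ)/10)) :=
          Real.sqrt_mul (by norm_num) _
      _ = Real.sqrt 10 * t ^ ((1:ℝ)/20) := by
          have : Real.sqrt (t ^ ((1:ℝ)/10)) = t ^ ((1:ℝ)/20) := by
            rw [Real.sqrt_eq_rpow, ← Real.rpow_mul ht0.le]; norm_num
          rw [this]
  have hbμ : b * |μ| ≤ c₁ / 2 * t := by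
    have hsq : Real.sqrt (t * Real.log t) = Real.sqrt t * Real.sqrt (Real.log t) :=
      Real.sqrt_mul ht0.le _
    have h10 : (0:ℝ) < Real.sqrt 10 := by positivity
    have hμ' : |μ| ≤ M * (Real.sqrt 10 * (Real.sqrt t * t ^ ((1:ℝ)/20))) := by
      calc |μ| ≤ M * Real.sqrt (t * Real.log t) := hμ
        _ = M * (Real.sqrt t * Real.sqrt (Real.log t)) := by rw [hsq]
        _ ≤ M * (Real.sqrt t * (Real.sqrt 10 * t ^ ((1:ℝ)/20))) := by
            have := mul_le_mul_of_nonneg_left hsqrtlog (Real.sqrt_nonneg t)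
            exact mul_le_mul_of_nonneg_left this hM.le
        _ = M * (Real.sqrt 10 * (Real.sqrt t * t ^ ((1:ℝ)/20))) := by ring
    have key : b * (Real.sqrt t * t ^ ((1:ℝ)/20)) = t ^ ((19:ℝ)/20) := by
      rw [hb_def, Real.sqrt_eq_rpow, ← Real.rpow_add ht0, ← Real.rpow_add ht0]
      norm_num
    have key2 : t ^ ((19:ℝ)/20) = t ^ (-(1:ℝ)/20) * t := by
      rw [show (19:ℝ)/20 = -(1:ℝ)/20 + 1 by norm_num, Real.rpow_add_one ht0.ne']
    calc b * |μ| ≤ b * (M * (Real.sqrt 10 * (Real.sqrt t * t ^ ((1:ℝ)/20)))) :=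
          mul_le_mul_of_nonneg_left hμ' hb0.le
      _ = M * Real.sqrt 10 * (b * (Real.sqrt t * t ^ ((1:ℝ)/20))) := by ring
      _ = M * Real.sqrt 10 * t ^ (-(1:ℝ)/20) * t := by rw [key, key2]; ring
      _ ≤ c₁ / 2 * t := mul_le_mul_of_nonneg_right ht20 ht0.le
  have hnum : b ^ 2 + b * |μ| ≤ σ2 := by
    have : b ^ 2 + b * |μ| ≤ c₁ * t := by linarith
    linarith [hσ2.1]
  -- the exponent comparison constant
  set L := (Real.log t) ^ ((2:ℝ)/3) with hL_def
  have hL1 : (1:ℝ) ≤ L := by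
    rw [hL_def]
    calc (1:ℝ) = 1 ^ ((2:ℝ)/3) := (Real.one_rpow _).symm
      _ ≤ (Real.log t) ^ ((2:ℝ)/3) :=
          Real.rpow_le_rpow (by norm_num) hlog1 (by norm_num)
  set E := Real.exp ((b ^ 2 + b * |μ|) / σ2) with hE_def
  have hE0 : 0 < E := Real.exp_pos _
  have hEL : E ≤ Real.exp L := by
    apply Real.exp_le_exp.mpr
    have hd : (b ^ 2 + b * |μ|) / σ2 ≤ 1 := by
      rw [div_le_one hσ]; exact hnum
    linarith
  -- pointwise comparison
  have hpt : ∀ y ∈ Set.Icc a b, ∀ x ∈ Set.Icc (0:ℝ) a,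
      gaussDensity μ σ2 x ≤ E * gaussDensity μ σ2 y := by
    intro y hy x hx
    unfold gaussDensity
    have hrw : E * ((Real.sqrt (2 * Real.pi * σ2))⁻¹ *
        Real.exp (-(y - μ) ^ 2 / (2 * σ2))) =
        (Real.sqrt (2 * Real.pi * σ2))⁻¹ *
          Real.exp ((b ^ 2 + b * |μ|) / σ2 + -(y - μ) ^ 2 / (2 * σ2)) := by
      rw [hE_def, Real.exp_add]; ring
    rw [hrw]
    apply mul_le_mul_of_nonneg_left _ (by positivity)
    apply Real.exp_le_exp.mpr
    have h2σ : (0:ℝ) < 2 * σ2 := by linarith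
    have hkey : (y - μ) ^ 2 - (x - μ) ^ 2 ≤ 2 * (b ^ 2 + b * |μ|) := by
      obtain ⟨hx0, hxa⟩ := hx
      obtain ⟨hay, hyb⟩ := hy
      have hμ1 : -|μ| ≤ μ := neg_abs_le μ
      have habs0 : (0:ℝ) ≤ |μ| := abs_nonneg μ
      have hd0 : (0:ℝ) ≤ y - x := by linarith
      have h5 : (y - x) * (y + x - 2 * μ) ≤ (y - x) * (2 * b + 2 * |μ|) :=
        mul_le_mul_of_nonneg_left (by linarith) hd0
      have h6 : (y - x) * (2 * b + 2 * |μ|) ≤ b * (2 * b + 2 * |μ|) :=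
        mul_le_mul_of_nonneg_right (by linarith) (by linarith)
      have hid : (y - μ) ^ 2 - (x - μ) ^ 2 = (y - x) * (y + x - 2 * μ) := by ring
      have h7 : b * (2 * b + 2 * |μ|) = 2 * (b ^ 2 + b * |μ|) := by ring
      linarith
    have heq : (b ^ 2 + b * |μ|) / σ2 = 2 * (b ^ 2 + b * |μ|) / (2 * σ2) := by
      rw [mul_div_mul_left _ _ (two_ne_zero)]
    rw [heq]
    rw [← add_div, div_le_div_iff_of_pos_right h2σ]
    linarith
  set I := ∫ z in (0:ℝ)..a, gaussDensity μ σ2 z with hI_def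
  set J := ∫ z in a..b, gaussDensity μ σ2 z with hJ_def
  have hJ0 : 0 ≤ J := by
    rw [hJ_def]
    apply intervalIntegral.integral_nonneg (by linarith)
    intro x _; exact hgnn x
  have hIub : ∀ y ∈ Set.Icc a b, I ≤ a * (E * gaussDensity μ σ2 y) := by
    intro y hy
    rw [hI_def]
    calc (∫ z in (0:ℝ)..a, gaussDensity μ σ2 z)
        ≤ ∫ _ in (0:ℝ)..a, E * gaussDensity μ σ2 y :=
          intervalIntegral.integral_mono_on ha0.le
            (hcont.intervalIntegrable _ _) intervalIntegrable_const
            (fun x hx => hpt y hy x hx)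
      _ = a * (E * gaussDensity μ σ2 y) := by
          rw [intervalIntegral.integral_const, smul_eq_mul, sub_zero]
  have haE : 0 < a * E := by positivity
  have hJlb : (b - a) * (I / (a * E)) ≤ J := by
    have hptJ : ∀ y ∈ Set.Icc a b, I / (a * E) ≤ gaussDensity μ σ2 y := by
      intro y hy
      rw [div_le_iff₀ haE]
      calc I ≤ a * (E * gaussDensity μ σ2 y) := hIub y hy
        _ = gaussDensity μ σ2 y * (a * E) := by ring
    rw [hJ_def]
    calc (b - a) * (I / (a * E)) = ∫ _ in a..b, I / (a * E) := by
          rw [intervalIntegral.integral_const, smul_eq_mul]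
      _ ≤ ∫ z in a..b, gaussDensity μ σ2 z :=
          intervalIntegral.integral_mono_on (by linarith)
            intervalIntegrable_const (hcont.intervalIntegrable _ _) hptJ
  have hmain : I ≤ a * E / (b - a) * J := by
    rw [div_mul_eq_mul_div, le_div_iff₀ hba0]
    have hcancel : I / (a * E) * (a * E) = I := div_mul_cancel₀ I haE.ne'
    calc I * (b - a) = (b - a) * (I / (a * E)) * (a * E) := by
          rw [mul_assoc, hcancel]; ring
      _ ≤ J * (a * E) := mul_le_mul_of_nonneg_right hJlb haE.le
      _ = a * E * J := by ring
  have hcoef : a * E / (b - a) ≤ 2 * s * Real.exp L := by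
    rw [div_le_iff₀ hba0]
    have h0 : a * E = b * s * E := by rw [hab]
    have hexpL : 0 < Real.exp L := Real.exp_pos _
    have h1 : b * s * E ≤ b * s * Real.exp L :=
      mul_le_mul_of_nonneg_left hEL (by positivity)
    have h2 : b * s * Real.exp L ≤ 2 * s * Real.exp L * (b - a) := by
      have hb2ba : b ≤ 2 * (b - a) := by linarith
      calc b * s * Real.exp L = b * (s * Real.exp L) := by ring
        _ ≤ 2 * (b - a) * (s * Real.exp L) :=
            mul_le_mul_of_nonneg_right hb2ba (by positivity)
        _ = 2 * s * Real.exp L * (b - a) := by ring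
    linarith
  calc I ≤ a * E / (b - a) * J := hmain
    _ ≤ 2 * s * Real.exp L * J :=
        mul_le_mul_of_nonneg_right hcoef hJ0
    _ = 2 * t ^ (-(1:ℝ)/15) * Real.exp L * J := by rw [hs_def]
end

section
/- For all constants c₁ > 0 and M ≥ 1 there exists K > 0 such that for all n ≥ 1, all σ² ≥ c₁·n, all m ∈ ℝ with |m| ≤ M·√n, all α ∈ [0, M·√n] and all β ≥ α + √n/2: ∫_0^{α} g_{m,σ²}(z) dz ≤ K · ∫_{α}^{β} g_{m,σ²}(z) dz. -/
/-- Gaussian comparison: for a Gaussian law with variance at least `c₁ n` and mean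
of size at most `M √n`, the mass of `[0, α]` with `α ≤ M √n` is at most a constant
(depending only on `c₁, M`) times the mass of an adjacent interval `[α, β]` of
length at least `√n / 2`. -/
theorem gaussian_adjacent_interval_comparison
    (c₁ M : ℝ) (hc : 0 < c₁) (hM : 1 ≤ M) :
    ∃ K : ℝ, 0 < K ∧
      ∀ n : ℕ, 1 ≤ n → ∀ m σ2 α β : ℝ,
        c₁ * (n : ℝ) ≤ σ2 → |m| ≤ M * Real.sqrt n →
        α ∈ Set.Icc (0 : ℝ) (M * Real.sqrt n) → α + Real.sqrt n / 2 ≤ β →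
        (∫ z in (0 : ℝ)..α, gaussDensity m σ2 z)
          ≤ K * ∫ z in α..β, gaussDensity m σ2 z := by
  set D := 9 * M ^ 2 / (2 * c₁) with hD
  refine ⟨2 * M * Real.exp D, by positivity, ?_⟩
  intro n hn m σ2 α β hσ hm hα hβ
  have hn1 : (1 : ℝ) ≤ (n : ℝ) := by exact_mod_cast hn
  have hnpos : (0 : ℝ) < (n : ℝ) := by linarith
  set t := Real.sqrt n with ht
  have ht1 : 1 ≤ t := Real.one_le_sqrt.mpr hn1
  have ht2 : t ^ 2 = (n : ℝ) := Real.sq_sqrt hnpos.le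
  have htpos : 0 < t := by linarith
  have hσpos : 0 < σ2 := lt_of_lt_of_le (by positivity) hσ
  obtain ⟨hα0, hαM⟩ := hα
  set C := (Real.sqrt (2 * Real.pi * σ2))⁻¹ with hC
  have hπ := Real.pi_pos
  have hCpos : 0 < C := by rw [hC]; positivity
  have hcont : Continuous (gaussDensity m σ2) := by
    unfold gaussDensity
    exact continuous_const.mul (Real.continuous_exp.comp (by fun_prop))
  have hnonneg : ∀ z : ℝ, 0 ≤ gaussDensity m σ2 z := by
    intro z
    unfold gaussDensity
    positivity
  have hle : ∀ z : ℝ, gaussDensity m σ2 z ≤ C := by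
    intro z
    unfold gaussDensity
    have hexp : Real.exp (-(z - m) ^ 2 / (2 * σ2)) ≤ 1 := by
      rw [Real.exp_le_one_iff]
      apply div_nonpos_of_nonpos_of_nonneg
      · simpa using sq_nonneg (z - m)
      · positivity
    calc C * Real.exp (-(z - m) ^ 2 / (2 * σ2)) ≤ C * 1 := by
          exact mul_le_mul_of_nonneg_left hexp hCpos.le
      _ = C := mul_one C
  -- upper bound on the left integral
  have h1 : (∫ z in (0 : ℝ)..α, gaussDensity m σ2 z) ≤ α * C := by
    have := intervalIntegral.integral_mono_on (μ := MeasureTheory.volume) hα0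
      (hcont.intervalIntegrable 0 α) (continuous_const.intervalIntegrable _ _)
      (fun z _ => hle z)
    simpa [smul_eq_mul, mul_comm, mul_assoc, mul_left_comm] using this
  -- lower bound on the density on [α, α + t/2]
  have hobs := abs_le.mp hm
  have hlow : ∀ z ∈ Set.Icc α (α + t / 2),
      C * Real.exp (-D) ≤ gaussDensity m σ2 z := by
    intro z hz
    obtain ⟨hz1, hz2⟩ := hz
    unfold gaussDensity
    have hsq : (z - m) ^ 2 ≤ (3 * M * t) ^ 2 := by
      apply sq_le_sq'
      · nlinarith
      · nlinarith
    have hdiv : (z - m) ^ 2 / (2 * σ2) ≤ D := by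
      have h9 : (3 * M * t) ^ 2 = 9 * M ^ 2 * (n : ℝ) := by
        rw [← ht2]; ring
      have hstep : (z - m) ^ 2 / (2 * σ2) ≤ 9 * M ^ 2 * (n : ℝ) / (2 * (c₁ * n)) := by
        apply div_le_div₀ (by positivity) (by linarith) (by positivity) (by linarith)
      have heq : 9 * M ^ 2 * (n : ℝ) / (2 * (c₁ * n)) = D := by
        rw [hD]; field_simp
      linarith
    have : Real.exp (-D) ≤ Real.exp (-(z - m) ^ 2 / (2 * σ2)) := by
      apply Real.exp_le_exp.mpr
      rw [neg_div]
      linarith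
    exact mul_le_mul_of_nonneg_left this hCpos.le
  -- lower bound on the adjacent integral
  have h2 : t / 2 * (C * Real.exp (-D)) ≤ ∫ z in α..(α + t / 2), gaussDensity m σ2 z := by
    have := intervalIntegral.integral_mono_on (μ := MeasureTheory.volume) (by linarith : α ≤ α + t / 2)
      (continuous_const.intervalIntegrable _ _) (hcont.intervalIntegrable α (α + t / 2)) hlow
    simpa [smul_eq_mul, mul_comm, mul_assoc, mul_left_comm] using this
  have h3 : (∫ z in α..(α + t / 2), gaussDensity m σ2 z)
      ≤ ∫ z in α..β, gaussDensity m σ2 z := by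
    rw [← intervalIntegral.integral_add_adjacent_intervals
      (hcont.intervalIntegrable α (α + t / 2)) (hcont.intervalIntegrable (α + t / 2) β)]
    have : 0 ≤ ∫ z in (α + t / 2)..β, gaussDensity m σ2 z :=
      intervalIntegral.integral_nonneg hβ (fun x _ => hnonneg x)
    linarith
  have key : 2 * M * Real.exp D * (t / 2 * (C * Real.exp (-D))) = M * t * C := by
    rw [Real.exp_neg]
    field_simp
  calc (∫ z in (0 : ℝ)..α, gaussDensity m σ2 z) ≤ α * C := h1
    _ ≤ M * t * C := mul_le_mul_of_nonneg_right hαM hCpos.le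
    _ = 2 * M * Real.exp D * (t / 2 * (C * Real.exp (-D))) := key.symm
    _ ≤ 2 * M * Real.exp D * ∫ z in α..β, gaussDensity m σ2 z := by
        apply mul_le_mul_of_nonneg_left (by linarith) (by positivity)
end

section
/- Let C ≥ 0 and m ≥ 1, let X_1,…,X_m be independent real-valued random variables with X_j ≥ −C almost surely for every j, and set S_0 = 0 and S_l = X_1 + … + X_l. Let D, z ∈ ℝ with z ≥ D, and let J ⊆ ℝ be a Borel set. Then P( (∀ l ≤ m: z + S_l ≥ D) and z + S_m ∈ J ) ≥ P( z + S_m ∈ J ) − max_{1 ≤ l ≤ m} sup_{d ∈ [D−C, D]} P( d + (S_m − S_l) ∈ J ). -/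
open MeasureTheory ProbabilityTheory

section WallRemovalAux
open Finset

lemma helper_ge (m l : ℕ) (hm : 0 < m) (g : ℕ → ℝ) (Tfin : Finset (Fin m))
    (hT : Tfin = Finset.univ.filter (fun i => l ≤ i.val)) :
    ∑ i : ↥Tfin, g (i : Fin m).val = ∑ j ∈ Finset.Ico l m, g j := by
  rw [Finset.sum_coe_sort Tfin (fun i => g i.val), hT]
  apply Finset.sum_nbij' (fun i : Fin m => i.val)
    (fun j => (⟨j % m, Nat.mod_lt j hm⟩ : Fin m))
  · intro a ha; simp at ha; simp [Finset.mem_Ico, ha, a.isLt]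
  · intro j hj; simp only [Finset.mem_Ico] at hj
    simp [Nat.mod_eq_of_lt hj.2, hj.1]
  · intro a ha; simp [Nat.mod_eq_of_lt a.isLt]
  · intro j hj; simp only [Finset.mem_Ico] at hj
    simp [Nat.mod_eq_of_lt hj.2]
  · intro a ha; rfl

lemma helper_lt (k l : ℕ) (hk : k ≤ l) (g : ℕ → ℝ) :
    (∑ i : Fin l, if (i : ℕ) < k then g i else 0) = ∑ j ∈ Finset.range k, g j := by
  rw [Fin.sum_univ_eq_sum_range (fun j => if j < k then g j else 0) l, ← Finset.sum_filter]
  congr 1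
  ext j
  simp only [Finset.mem_filter, Finset.mem_range]
  omega

lemma helper_step (l : ℕ) (hl : 1 ≤ l) (u : Fin l → ℝ) :
    (∑ i : Fin l, if (i : ℕ) < l then u i else 0)
      = (∑ i : Fin l, if (i : ℕ) < l - 1 then u i else 0) + u ⟨l - 1, by omega⟩ := by
  have h1 : (∑ i : Fin l, if (i : ℕ) < l then u i else 0)
      = ∑ i : Fin l, ((if (i : ℕ) < l - 1 then u i else 0)
          + (if i = (⟨l - 1, by omega⟩ : Fin l) then u i else 0)) := by
    apply Finset.sum_congr rfl
    intro i _
    rcases Nat.lt_or_ge (i : ℕ) (l - 1) with h | h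
    · rw [if_pos i.isLt, if_pos h, if_neg (by simp [Fin.ext_iff]; omega), add_zero]
    · have : (i : ℕ) = l - 1 := by omega
      rw [if_pos i.isLt, if_neg (by omega), if_pos (by simp [Fin.ext_iff, this]), zero_add]
  rw [h1, Finset.sum_add_distrib, Finset.sum_ite_eq' Finset.univ _ u]
  simp

lemma key_step {Ω : Type*} [MeasurableSpace Ω] (μ : Measure Ω) [IsProbabilityMeasure μ]
    (C : ℝ) (m : ℕ) (X : ℕ → Ω → ℝ) (hmeas : ∀ j, Measurable (X j))
    (hindep : iIndepFun (fun j : Fin m => X j) μ)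
    (D z : ℝ) (J : Set ℝ) (hJ : MeasurableSet J)
    (l : ℕ) (hl1 : 1 ≤ l) (hlm : l ≤ m) :
    μ ({ω | (∀ k < l, D ≤ z + ∑ j ∈ Finset.range k, X j ω) ∧
          z + ∑ j ∈ Finset.range l, X j ω < D ∧ ∀ j < l, -C ≤ X j ω} ∩
        {ω | z + ∑ j ∈ Finset.range m, X j ω ∈ J})
      ≤ μ {ω | (∀ k < l, D ≤ z + ∑ j ∈ Finset.range k, X j ω) ∧
          z + ∑ j ∈ Finset.range l, X j ω < D ∧ ∀ j < l, -C ≤ X j ω} *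
        ⨆ d ∈ Set.Icc (D - C) D,
          μ {ω | d + ((∑ j ∈ Finset.range m, X j ω)
              - ∑ j ∈ Finset.range l, X j ω) ∈ J} := by
  classical
  have hm0 : 0 < m := lt_of_lt_of_le hl1 hlm
  set M : ENNReal := ⨆ d ∈ Set.Icc (D - C) D,
      μ {ω | d + ((∑ j ∈ Finset.range m, X j ω)
          - ∑ j ∈ Finset.range l, X j ω) ∈ J} with hMdef
  set Sfin : Finset (Fin m) := Finset.univ.filter (fun i => i.val < l) with hSfin
  set Tfin : Finset (Fin m) := Finset.univ.filter (fun i => l ≤ i.val) with hTfin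
  have hdisj : Disjoint Sfin Tfin := by
    rw [Finset.disjoint_left]
    intro a ha hb
    rw [hSfin, Finset.mem_filter] at ha
    rw [hTfin, Finset.mem_filter] at hb
    omega
  have hbase := hindep.indepFun_finset Sfin Tfin hdisj (fun i => hmeas i)
  have hmemS : ∀ i : Fin l, (⟨(i : ℕ), lt_of_lt_of_le i.isLt hlm⟩ : Fin m) ∈ Sfin := by
    intro i; rw [hSfin, Finset.mem_filter]; exact ⟨Finset.mem_univ _, i.isLt⟩
  set φ : (↥Sfin → ℝ) → (Fin l → ℝ) :=
    fun v i => v ⟨⟨(i : ℕ), lt_of_lt_of_le i.isLt hlm⟩, hmemS i⟩ with hφdef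
  have hφ : Measurable φ :=
    measurable_pi_lambda _ (fun i => measurable_pi_apply _)
  set ψ : (↥Tfin → ℝ) → ℝ := fun v => ∑ i : ↥Tfin, v i with hψdef
  have hψ : Measurable ψ :=
    Finset.measurable_sum _ (fun i _ => measurable_pi_apply i)
  set U : Ω → (Fin l → ℝ) := φ ∘ (fun ω (i : ↥Sfin) => X (i : Fin m) ω) with hUdef
  set T : Ω → ℝ := ψ ∘ (fun ω (i : ↥Tfin) => X (i : Fin m) ω) with hTdef
  have hUT : IndepFun U T μ := hbase.comp hφ hψ
  have hUmeas : Measurable U :=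
    hφ.comp (measurable_pi_lambda _ (fun i => hmeas _))
  have hTmeas : Measurable T :=
    hψ.comp (measurable_pi_lambda _ (fun i => hmeas _))
  have hUeval : ∀ ω i, U ω i = X (i : ℕ) ω := fun ω i => rfl
  have hTeval : ∀ ω, T ω = ∑ j ∈ Finset.Ico l m, X j ω := by
    intro ω
    exact helper_ge m l hm0 (fun j => X j ω) Tfin hTfin
  set Q : ℕ → (Fin l → ℝ) → ℝ :=
    fun k u => ∑ i : Fin l, if (i : ℕ) < k then u i else 0 with hQdef
  have hQmeas : ∀ k, Measurable (Q k) := by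
    intro k
    apply Finset.measurable_sum
    intro i _
    by_cases h : (i : ℕ) < k
    · simpa [h] using measurable_pi_apply i
    · simpa [h] using @measurable_const ℝ _ _ _ 0
  have hQU : ∀ k, k ≤ l → ∀ ω, Q k (U ω) = ∑ j ∈ Finset.range k, X j ω := by
    intro k hk ω
    rw [hQdef]
    simp only [hUeval]
    exact helper_lt k l hk (fun j => X j ω)
  set G : Set (Fin l → ℝ) :=
    {u | (∀ k < l, D ≤ z + Q k u) ∧ z + Q l u < D ∧ ∀ i : Fin l, -C ≤ u i} with hGdef
  have hG : MeasurableSet G := by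
    have h1 : MeasurableSet {u : Fin l → ℝ | ∀ k < l, D ≤ z + Q k u} := by
      have he : {u : Fin l → ℝ | ∀ k < l, D ≤ z + Q k u}
          = ⋂ k ∈ Set.Iio l, {u | D ≤ z + Q k u} := by
        ext u; simp [Set.mem_iInter]
      rw [he]
      exact MeasurableSet.biInter (Set.to_countable _)
        (fun k _ => measurableSet_le measurable_const (measurable_const.add (hQmeas k)))
    have h2 : MeasurableSet {u : Fin l → ℝ | z + Q l u < D} :=
      measurableSet_lt (measurable_const.add (hQmeas l)) measurable_const
    have h3 : MeasurableSet {u : Fin l → ℝ | ∀ i, -C ≤ u i} := by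
      have he : {u : Fin l → ℝ | ∀ i, -C ≤ u i} = ⋂ i, {u | -C ≤ u i} := by
        ext u; simp [Set.mem_iInter]
      rw [he]
      exact MeasurableSet.iInter
        (fun i => measurableSet_le measurable_const (measurable_pi_apply i))
    have he : G = {u : Fin l → ℝ | ∀ k < l, D ≤ z + Q k u}
        ∩ ({u | z + Q l u < D} ∩ {u | ∀ i, -C ≤ u i}) := by
      ext u; simp only [hGdef, Set.mem_setOf_eq, Set.mem_inter_iff, and_assoc]
    rw [he]
    exact h1.inter (h2.inter h3)
  set E : Set ((Fin l → ℝ) × ℝ) := {p | p.1 ∈ G ∧ z + Q l p.1 + p.2 ∈ J} with hEdef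
  have hE : MeasurableSet E := by
    have hf : Measurable (fun p : (Fin l → ℝ) × ℝ => z + Q l p.1 + p.2) :=
      (measurable_const.add ((hQmeas l).comp measurable_fst)).add measurable_snd
    exact (hG.preimage measurable_fst).inter (hf hJ)
  have hsum : ∀ ω, z + Q l (U ω) + T ω = z + ∑ j ∈ Finset.range m, X j ω := by
    intro ω
    rw [hQU l le_rfl, hTeval, Finset.sum_Ico_eq_sub _ hlm]
    ring
  have hFeq : U ⁻¹' G = {ω | (∀ k < l, D ≤ z + ∑ j ∈ Finset.range k, X j ω) ∧
      z + ∑ j ∈ Finset.range l, X j ω < D ∧ ∀ j < l, -C ≤ X j ω} := by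
    ext ω
    simp only [Set.mem_preimage, hGdef, Set.mem_setOf_eq]
    constructor
    · rintro ⟨h1, h2, h3⟩
      refine ⟨fun k hk => by rw [← hQU k hk.le]; exact h1 k hk,
        by rw [← hQU l le_rfl]; exact h2,
        fun j hj => by have := h3 ⟨j, hj⟩; rwa [hUeval] at this⟩
    · rintro ⟨h1, h2, h3⟩
      refine ⟨fun k hk => by rw [hQU k hk.le]; exact h1 k hk,
        by rw [hQU l le_rfl]; exact h2,
        fun i => by rw [hUeval]; exact h3 i i.isLt⟩
  have hpair : ({ω | (∀ k < l, D ≤ z + ∑ j ∈ Finset.range k, X j ω) ∧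
        z + ∑ j ∈ Finset.range l, X j ω < D ∧ ∀ j < l, -C ≤ X j ω} ∩
      {ω | z + ∑ j ∈ Finset.range m, X j ω ∈ J})
      = (fun ω => (U ω, T ω)) ⁻¹' E := by
    ext ω
    simp only [Set.mem_inter_iff, Set.mem_setOf_eq, Set.mem_preimage, hEdef]
    rw [hsum]
    constructor
    · rintro ⟨hF, hB⟩
      have : ω ∈ U ⁻¹' G := by rw [hFeq]; exact hF
      exact ⟨this, hB⟩
    · rintro ⟨hGmem, hB⟩
      have : ω ∈ U ⁻¹' G := hGmem
      rw [hFeq] at this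
      exact ⟨this, hB⟩
  have hbd : ∀ u, (μ.map T) (Prod.mk u ⁻¹' E) ≤ G.indicator (fun _ => M) u := by
    intro u
    by_cases hu : u ∈ G
    · rw [Set.indicator_of_mem hu]
      have hsec : Prod.mk u ⁻¹' E = (fun t => z + Q l u + t) ⁻¹' J := by
        ext t
        simp only [Set.mem_preimage, hEdef, Set.mem_setOf_eq]
        exact ⟨fun h => h.2, fun h => ⟨hu, h⟩⟩
      have hmc : Measurable (fun t : ℝ => z + Q l u + t) := measurable_id.const_add _
      rw [hsec, Measure.map_apply hTmeas (hmc hJ)]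
      have hTset : T ⁻¹' ((fun t => z + Q l u + t) ⁻¹' J)
          = {ω | (z + Q l u) + ((∑ j ∈ Finset.range m, X j ω)
              - ∑ j ∈ Finset.range l, X j ω) ∈ J} := by
        ext ω
        simp only [Set.mem_preimage, Set.mem_setOf_eq, hTeval ω,
          Finset.sum_Ico_eq_sub _ hlm]
      rw [hTset]
      have hd : z + Q l u ∈ Set.Icc (D - C) D := by
        rcases hu with ⟨h1, h2, h3⟩
        constructor
        · have hstep := helper_step l hl1 u
          have ha := h1 (l - 1) (by omega)
          have hb := h3 ⟨l - 1, by omega⟩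
          have : Q l u = Q (l - 1) u + u ⟨l - 1, by omega⟩ := hstep
          rw [this] at h2 ⊢
          linarith
        · exact le_of_lt h2
      rw [hMdef]
      exact le_biSup (fun d => μ {ω | d + ((∑ j ∈ Finset.range m, X j ω)
          - ∑ j ∈ Finset.range l, X j ω) ∈ J}) hd
    · rw [Set.indicator_of_notMem hu]
      have : Prod.mk u ⁻¹' E = ∅ := by
        ext t
        simp only [Set.mem_preimage, hEdef, Set.mem_setOf_eq, Set.mem_empty_iff_false, iff_false]
        exact fun h => hu h.1
      simp [this]
  have hMapEq := (indepFun_iff_map_prod_eq_prod_map_map hUmeas.aemeasurable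
    hTmeas.aemeasurable).mp hUT
  calc μ ({ω | (∀ k < l, D ≤ z + ∑ j ∈ Finset.range k, X j ω) ∧
        z + ∑ j ∈ Finset.range l, X j ω < D ∧ ∀ j < l, -C ≤ X j ω} ∩
      {ω | z + ∑ j ∈ Finset.range m, X j ω ∈ J})
      = μ ((fun ω => (U ω, T ω)) ⁻¹' E) := by rw [hpair]
    _ = (μ.map (fun ω => (U ω, T ω))) E :=
        (Measure.map_apply (hUmeas.prodMk hTmeas) hE).symm
    _ = ((μ.map U).prod (μ.map T)) E := by rw [hMapEq]
    _ = ∫⁻ u, (μ.map T) (Prod.mk u ⁻¹' E) ∂(μ.map U) := Measure.prod_apply hE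
    _ ≤ ∫⁻ u, G.indicator (fun _ => M) u ∂(μ.map U) := lintegral_mono hbd
    _ = M * (μ.map U) G := by rw [lintegral_indicator hG, setLIntegral_const]
    _ = (μ.map U) G * M := mul_comm _ _
    _ = μ {ω | (∀ k < l, D ≤ z + ∑ j ∈ Finset.range k, X j ω) ∧
          z + ∑ j ∈ Finset.range l, X j ω < D ∧ ∀ j < l, -C ≤ X j ω} * M := by
        rw [Measure.map_apply hUmeas hG, hFeq]

end WallRemovalAux

/-- Reflection-type barrier removal inequality: for a walk with independent
increments bounded below by `-C`, starting at `z ≥ D`, the probability of staying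
above level `D` and ending in `J` is at least the probability of ending in `J`
minus the worst-case probability, over the first breach time `l ∈ {1,…,m}` and
breach positions `d ∈ [D - C, D]`, that the remaining increments carry the walk
from `d` into `J`. -/
theorem wall_removal_reflection
    {Ω : Type*} [MeasurableSpace Ω] (μ : Measure Ω) [IsProbabilityMeasure μ]
    (C : ℝ) (hC : 0 ≤ C) (m : ℕ) (hm : 1 ≤ m) (X : ℕ → Ω → ℝ)
    (hmeas : ∀ j, Measurable (X j))
    (hindep : iIndepFun (fun j : Fin m => X j) μ)
    (hbound : ∀ j < m, ∀ᵐ ω ∂μ, -C ≤ X j ω)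
    (D z : ℝ) (hz : D ≤ z) (J : Set ℝ) (hJ : MeasurableSet J) :
    μ {ω | (∀ l ≤ m, D ≤ z + ∑ j ∈ Finset.range l, X j ω) ∧
        z + (∑ j ∈ Finset.range m, X j ω) ∈ J}
      ≥ μ {ω | z + (∑ j ∈ Finset.range m, X j ω) ∈ J}
        - ⨆ l ∈ Finset.Icc 1 m, ⨆ d ∈ Set.Icc (D - C) D,
            μ {ω | d + ((∑ j ∈ Finset.range m, X j ω)
                - ∑ j ∈ Finset.range l, X j ω) ∈ J} := by
  classical
  set M : ENNReal := ⨆ l ∈ Finset.Icc 1 m, ⨆ d ∈ Set.Icc (D - C) D,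
      μ {ω | d + ((∑ j ∈ Finset.range m, X j ω)
          - ∑ j ∈ Finset.range l, X j ω) ∈ J} with hMdef
  set F : ℕ → Set Ω := fun l => {ω | (∀ k < l, D ≤ z + ∑ j ∈ Finset.range k, X j ω) ∧
      z + ∑ j ∈ Finset.range l, X j ω < D ∧ ∀ j < l, -C ≤ X j ω} with hFdef
  set B : Set Ω := {ω | z + (∑ j ∈ Finset.range m, X j ω) ∈ J} with hBdef
  set A : Set Ω := {ω | (∀ l ≤ m, D ≤ z + ∑ j ∈ Finset.range l, X j ω) ∧
      z + (∑ j ∈ Finset.range m, X j ω) ∈ J} with hAdef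
  set N : Set Ω := ⋃ j ∈ Finset.range m, {ω | X j ω < -C} with hNdef
  have hSmeas : ∀ k, Measurable (fun ω => ∑ j ∈ Finset.range k, X j ω) :=
    fun k => Finset.measurable_sum _ (fun j _ => hmeas j)
  have hN : μ N = 0 := by
    rw [hNdef]
    refine measure_biUnion_null_iff (Finset.countable_toSet _) |>.mpr ?_
    intro j hj
    have := hbound j (Finset.mem_range.mp hj)
    rw [ae_iff] at this
    convert this using 2
    ext ω
    simp [not_le]
  -- cover
  have hcover : B ⊆ A ∪ ((⋃ l ∈ Finset.Icc 1 m, F l ∩ B) ∪ N) := by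
    intro ω hB
    by_cases hA : ∀ l ≤ m, D ≤ z + ∑ j ∈ Finset.range l, X j ω
    · exact Or.inl ⟨hA, hB⟩
    right
    by_cases hNmem : ω ∈ N
    · exact Or.inr hNmem
    left
    push_neg at hA
    have hex : ∃ l, l ≤ m ∧ z + ∑ j ∈ Finset.range l, X j ω < D := hA
    set l0 := Nat.find hex with hl0def
    obtain ⟨hl0m, hl0lt⟩ := Nat.find_spec hex
    rw [← hl0def] at hl0m hl0lt
    have hl0pos : 1 ≤ l0 := by
      by_contra h
      have : l0 = 0 := by omega
      rw [this] at hl0lt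
      simp at hl0lt
      linarith
    have hNmem' : ∀ j < m, -C ≤ X j ω := by
      intro j hj
      by_contra h
      exact hNmem (Set.mem_biUnion (Finset.mem_range.mpr hj) (Set.mem_setOf_eq ▸ lt_of_not_ge h))
    refine Set.mem_biUnion (Finset.mem_Icc.mpr ⟨hl0pos, hl0m⟩) ⟨⟨?_, hl0lt, ?_⟩, hB⟩
    · intro k hk
      have hmin := Nat.find_min hex (hl0def ▸ hk)
      push_neg at hmin
      exact hmin (le_trans (le_of_lt hk) hl0m)
    · intro j hj
      exact hNmem' j (lt_of_lt_of_le hj hl0m)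
  -- measurability of F l
  have hFmeas : ∀ l, MeasurableSet (F l) := by
    intro l
    have h1 : MeasurableSet {ω : Ω | ∀ k < l, D ≤ z + ∑ j ∈ Finset.range k, X j ω} := by
      have he : {ω : Ω | ∀ k < l, D ≤ z + ∑ j ∈ Finset.range k, X j ω}
          = ⋂ k ∈ Set.Iio l, {ω | D ≤ z + ∑ j ∈ Finset.range k, X j ω} := by
        ext ω; simp [Set.mem_iInter]
      rw [he]
      exact MeasurableSet.biInter (Set.to_countable _)
        (fun k _ => measurableSet_le measurable_const (measurable_const.add (hSmeas k)))
    have h2 : MeasurableSet {ω : Ω | z + ∑ j ∈ Finset.range l, X j ω < D} :=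
      measurableSet_lt (measurable_const.add (hSmeas l)) measurable_const
    have h3 : MeasurableSet {ω : Ω | ∀ j < l, -C ≤ X j ω} := by
      have he : {ω : Ω | ∀ j < l, -C ≤ X j ω}
          = ⋂ j ∈ Set.Iio l, {ω | -C ≤ X j ω} := by
        ext ω; simp [Set.mem_iInter]
      rw [he]
      exact MeasurableSet.biInter (Set.to_countable _)
        (fun j _ => measurableSet_le measurable_const (hmeas j))
    have he : F l = {ω : Ω | ∀ k < l, D ≤ z + ∑ j ∈ Finset.range k, X j ω}
        ∩ ({ω | z + ∑ j ∈ Finset.range l, X j ω < D} ∩ {ω | ∀ j < l, -C ≤ X j ω}) := by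
      ext ω; simp only [hFdef, Set.mem_setOf_eq, Set.mem_inter_iff, and_assoc]
    rw [he]
    exact h1.inter (h2.inter h3)
  -- disjointness
  have hdisjF : ∀ a b, a < b → Disjoint (F a) (F b) := by
    intro a b hab
    rw [Set.disjoint_left]
    intro ω ha hb
    exact absurd (hb.1 a hab) (not_le.mpr ha.2.1)
  have hsumle : ∑ l ∈ Finset.Icc 1 m, μ (F l) ≤ 1 := by
    have heq : ∑ l ∈ Finset.Icc 1 m, μ (F l) = μ (⋃ l ∈ Finset.Icc 1 m, F l) := by
      refine (measure_biUnion_finset ?_ (fun l _ => hFmeas l)).symm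
      intro a _ b _ hab
      rcases lt_or_gt_of_ne hab with h | h
      · exact hdisjF a b h
      · exact (hdisjF b a h).symm
    rw [heq]
    calc μ (⋃ l ∈ Finset.Icc 1 m, F l) ≤ μ Set.univ := measure_mono (Set.subset_univ _)
      _ = 1 := measure_univ
  -- inner sup bound
  have hinner : ∀ l ∈ Finset.Icc 1 m,
      (⨆ d ∈ Set.Icc (D - C) D, μ {ω | d + ((∑ j ∈ Finset.range m, X j ω)
          - ∑ j ∈ Finset.range l, X j ω) ∈ J}) ≤ M := by
    intro l hl
    rw [hMdef]
    exact le_iSup₂ (f := fun l (_ : l ∈ Finset.Icc 1 m) => ⨆ d ∈ Set.Icc (D - C) D,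
      μ {ω | d + ((∑ j ∈ Finset.range m, X j ω)
          - ∑ j ∈ Finset.range l, X j ω) ∈ J}) l hl
  -- main chain
  have hchain : μ B ≤ μ A + M := by
    calc μ B ≤ μ (A ∪ ((⋃ l ∈ Finset.Icc 1 m, F l ∩ B) ∪ N)) := measure_mono hcover
      _ ≤ μ A + μ ((⋃ l ∈ Finset.Icc 1 m, F l ∩ B) ∪ N) := measure_union_le _ _
      _ ≤ μ A + (μ (⋃ l ∈ Finset.Icc 1 m, F l ∩ B) + μ N) :=
          add_le_add_right (measure_union_le _ _) _
      _ = μ A + μ (⋃ l ∈ Finset.Icc 1 m, F l ∩ B) := by rw [hN, add_zero]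
      _ ≤ μ A + ∑ l ∈ Finset.Icc 1 m, μ (F l ∩ B) :=
          add_le_add_right (measure_biUnion_finset_le _ _) _
      _ ≤ μ A + ∑ l ∈ Finset.Icc 1 m, μ (F l) * M := by
          refine add_le_add_right (Finset.sum_le_sum ?_) _
          intro l hl
          rw [Finset.mem_Icc] at hl
          calc μ (F l ∩ B) ≤ μ (F l) * ⨆ d ∈ Set.Icc (D - C) D,
              μ {ω | d + ((∑ j ∈ Finset.range m, X j ω)
                  - ∑ j ∈ Finset.range l, X j ω) ∈ J} :=
                key_step μ C m X hmeas hindep D z J hJ l hl.1 hl.2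
            _ ≤ μ (F l) * M := mul_le_mul_right (hinner l (Finset.mem_Icc.mpr hl)) _
      _ = μ A + (∑ l ∈ Finset.Icc 1 m, μ (F l)) * M := by rw [Finset.sum_mul]
      _ ≤ μ A + 1 * M := add_le_add_right (mul_le_mul_left hsumle M) _
      _ = μ A + M := by rw [one_mul]
  exact tsub_le_iff_right.mpr hchain
end

section
/- For all constants C > 0 and c > 0 one has sup_{n ≥ 3} Σ_{k=1}^{⌊n − (log n)^7⌋} n^{C·k/n} · exp( −c·( (min(k+1, n−k+1))^{1/6} − 1 ) ) < ∞. -/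
open Real Finset Filter

lemma aux_sum_inv_sq (M : ℕ) : ∑ k ∈ Finset.Icc 1 M, (1 : ℝ) / (k : ℝ) ^ 2 ≤ 2 := by
  have h : ∀ M : ℕ, 1 ≤ M → ∑ k ∈ Finset.Icc 1 M, (1 : ℝ) / (k : ℝ) ^ 2 ≤ 2 - 1 / M := by
    intro M hM
    induction M, hM using Nat.le_induction with
    | base => norm_num
    | succ M hM ih =>
      rw [Finset.sum_Icc_succ_top (by omega)]
      have hM0 : (0:ℝ) < M := by exact_mod_cast hM
      have hM1 : (0:ℝ) < (M:ℝ) + 1 := by linarith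
      have key : (1:ℝ) / ((M:ℝ)+1)^2 ≤ 1 / M - 1 / ((M:ℝ)+1) := by
        rw [div_sub_div _ _ (ne_of_gt hM0) (ne_of_gt hM1)]
        rw [div_le_div_iff₀ (by positivity) (by positivity)]
        ring_nf
        nlinarith
      push_cast
      linarith
  rcases Nat.eq_zero_or_pos M with h0 | h1
  · simp [h0]
  · have h2 := h M h1
    have h3 : (0:ℝ) < M := by exact_mod_cast h1
    have h4 : (0:ℝ) < 1 / (M:ℝ) := by positivity
    linarith

-- exp lower bound
lemma aux_exp_ge (x : ℝ) (hx : 0 ≤ x) : x ^ 12 / 479001600 ≤ Real.exp x := by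
  have h := Real.sum_le_exp_of_nonneg hx 13
  have : x ^ 12 / (Nat.factorial 12 : ℝ) ≤ ∑ i ∈ Finset.range 13, x ^ i / (Nat.factorial i : ℝ) := by
    apply Finset.single_le_sum (f := fun i => x ^ i / (Nat.factorial i : ℝ))
    · intro i _; positivity
    · simp
  simp only [Nat.factorial] at this
  norm_num at this ⊢
  linarith

lemma aux_decay (a : ℝ) (ha : 0 < a) (k : ℕ) (hk : 1 ≤ k) :
    Real.exp (-(a * (k : ℝ) ^ ((1:ℝ)/6))) ≤ (479001600 / a ^ 12) * (1 / (k:ℝ)^2) := by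
  have hk0 : (0:ℝ) < k := by exact_mod_cast hk
  set x := a * (k : ℝ) ^ ((1:ℝ)/6) with hxdef
  have hx0 : 0 < x := by positivity
  have h1 : x ^ 12 / 479001600 ≤ Real.exp x := aux_exp_ge x hx0.le
  have h2 : x ^ 12 = a ^ 12 * (k:ℝ)^2 := by
    rw [hxdef, mul_pow]
    congr 1
    rw [← Real.rpow_natCast ((k:ℝ) ^ ((1:ℝ)/6)) 12, ← Real.rpow_mul hk0.le]
    norm_num
  have h3 : a ^ 12 * (k:ℝ)^2 / 479001600 ≤ Real.exp x := by rw [← h2]; exact h1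
  have hR : (0:ℝ) < (479001600 / a ^ 12) * (1 / (k:ℝ)^2) := by positivity
  rw [Real.exp_neg, inv_le_comm₀ (Real.exp_pos x) hR]
  have hinv : ((479001600 / a ^ 12) * (1 / (k:ℝ)^2))⁻¹ = a ^ 12 * (k:ℝ)^2 / 479001600 := by
    field_simp
  rw [hinv]; exact h3

lemma aux_N (C c : ℝ) (hC : 0 < C) (hc : 0 < c) : ∃ N : ℕ, ∀ n : ℕ, N ≤ n →
    C * Real.log n ≤ (c/2) * (n:ℝ) ^ ((1:ℝ)/6) ∧ (C+1) * Real.log n ≤ c * (Real.log n) ^ ((7:ℝ)/6) := by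
  have h1 : ∀ᶠ x : ℝ in atTop, ‖Real.log x‖ ≤ (c / (2*C)) * ‖x ^ ((1:ℝ)/6)‖ :=
    (isLittleO_log_rpow_atTop (by norm_num : (0:ℝ) < 1/6)).def (by positivity)
  have h2 : Tendsto (fun x : ℝ => (Real.log x) ^ ((1:ℝ)/6)) atTop atTop :=
    (tendsto_rpow_atTop (by norm_num)).comp Real.tendsto_log_atTop
  have h2' : ∀ᶠ x : ℝ in atTop, (C+1)/c ≤ (Real.log x) ^ ((1:ℝ)/6) := h2.eventually_ge_atTop _
  have h3 : ∀ᶠ x : ℝ in atTop, (1:ℝ) ≤ x := eventually_ge_atTop 1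
  have hall := (tendsto_natCast_atTop_atTop (R := ℝ)).eventually (h1.and (h2'.and h3))
  rw [eventually_atTop] at hall
  obtain ⟨N, hN⟩ := hall
  refine ⟨N, fun n hn => ?_⟩
  obtain ⟨ha, hb, hc1⟩ := hN n hn
  have hlog : 0 ≤ Real.log n := Real.log_nonneg hc1
  constructor
  · have hr : 0 ≤ (n:ℝ) ^ ((1:ℝ)/6) := Real.rpow_nonneg (by linarith) _
    rw [Real.norm_eq_abs, Real.norm_eq_abs, abs_of_nonneg hlog, abs_of_nonneg hr] at ha
    calc C * Real.log n ≤ C * ((c/(2*C)) * (n:ℝ) ^ ((1:ℝ)/6)) :=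
          mul_le_mul_of_nonneg_left ha hC.le
      _ = (c/2) * (n:ℝ) ^ ((1:ℝ)/6) := by field_simp
  · have key : (Real.log n) ^ ((7:ℝ)/6) = Real.log n * (Real.log n) ^ ((1:ℝ)/6) := by
      rw [← Real.rpow_one_add' hlog (by norm_num : (1:ℝ) + 1/6 ≠ 0)]
      norm_num
    rw [key]
    have hb' : (C+1) ≤ c * (Real.log n) ^ ((1:ℝ)/6) := by
      rw [div_le_iff₀ hc] at hb; linarith [hb]
    calc (C+1) * Real.log n ≤ (c * (Real.log n) ^ ((1:ℝ)/6)) * Real.log n :=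
          mul_le_mul_of_nonneg_right hb' hlog
      _ = c * (Real.log n * (Real.log n) ^ ((1:ℝ)/6)) := by ring

set_option maxHeartbeats 1000000 in
/-- The key analytic estimate of Lemma `taueasy`: the sums
`Σ_{k=1}^{⌊n - (log n)^7⌋} n^{C k / n} exp(-c ((min(k+1, n-k+1))^{1/6} - 1))`
are bounded uniformly in `n ≥ 3`. -/
theorem taueasy_sum_bounded (C c : ℝ) (hC : 0 < C) (hc : 0 < c) :
    ∃ B : ℝ, ∀ n : ℕ, 3 ≤ n →
      (∑ k ∈ Finset.Icc 1 ⌊(n : ℝ) - Real.log n ^ 7⌋₊,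
          (n : ℝ) ^ (C * (k : ℝ) / (n : ℝ)) *
            Real.exp (-c *
              ((min ((k : ℝ) + 1) ((n : ℝ) - (k : ℝ) + 1)) ^ ((1 : ℝ) / 6) - 1)))
        ≤ B := by
  obtain ⟨N, hN⟩ := aux_N C c hC hc
  set D : ℝ := 479001600 / (c/2) ^ 12 with hD
  have hD0 : 0 ≤ D := by positivity
  set B1 : ℝ := (N:ℝ) * ((N:ℝ) ^ C * Real.exp c) with hB1
  set B2 : ℝ := Real.exp c * D * 2 + Real.exp c with hB2
  have hB1nn : 0 ≤ B1 := by positivity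
  have hB2nn : 0 ≤ B2 := by positivity
  refine ⟨B1 + B2, fun n hn3 => ?_⟩
  set K := ⌊(n : ℝ) - Real.log n ^ 7⌋₊ with hK
  have hn0 : (0:ℝ) < n := by positivity
  have hn1 : (1:ℝ) ≤ n := by exact_mod_cast Nat.one_le_of_lt hn3
  have hlog : 0 ≤ Real.log n := Real.log_nonneg hn1
  have hKn : K ≤ n := by
    calc K ≤ ⌊(n:ℝ)⌋₊ := Nat.floor_le_floor (by nlinarith [pow_nonneg hlog 7])
      _ = n := Nat.floor_natCast n
  -- general bounds on terms
  have hterm_exp : ∀ k ∈ Finset.Icc 1 K,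
      Real.exp (-c * ((min ((k : ℝ) + 1) ((n : ℝ) - (k : ℝ) + 1)) ^ ((1:ℝ)/6) - 1)) ≤ Real.exp c := by
    intro k hk
    simp only [Finset.mem_Icc] at hk
    have hkn : (k:ℝ) ≤ n := by exact_mod_cast le_trans hk.2 hKn
    have hm0 : (0:ℝ) ≤ min ((k : ℝ) + 1) ((n : ℝ) - (k : ℝ) + 1) := by
      apply le_min <;> [positivity; linarith]
    have := Real.rpow_nonneg hm0 ((1:ℝ)/6)
    apply Real.exp_le_exp.2
    nlinarith
  rcases lt_or_ge n N with hnN | hnN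
  · -- crude bound for small n
    have hstep : ∀ k ∈ Finset.Icc 1 K,
        (n : ℝ) ^ (C * (k : ℝ) / (n : ℝ)) *
            Real.exp (-c * ((min ((k : ℝ) + 1) ((n : ℝ) - (k : ℝ) + 1)) ^ ((1:ℝ)/6) - 1))
          ≤ (N:ℝ) ^ C * Real.exp c := by
      intro k hk
      have hmem := hk
      simp only [Finset.mem_Icc] at hk
      have hkn : (k:ℝ) ≤ n := by exact_mod_cast le_trans hk.2 hKn
      have h1 : (n : ℝ) ^ (C * (k : ℝ) / (n : ℝ)) ≤ (n:ℝ) ^ C := by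
        apply Real.rpow_le_rpow_of_exponent_le hn1
        rw [div_le_iff₀ hn0]
        have := mul_le_mul_of_nonneg_left hkn hC.le
        linarith
      have h2 : (n:ℝ) ^ C ≤ (N:ℝ) ^ C := by
        apply Real.rpow_le_rpow hn0.le (by exact_mod_cast hnN.le) hC.le
      have h3 := hterm_exp k hmem
      have h4 : (0:ℝ) ≤ (n : ℝ) ^ (C * (k : ℝ) / (n : ℝ)) := Real.rpow_nonneg hn0.le _
      exact mul_le_mul (le_trans h1 h2) h3 (Real.exp_pos _).le (by positivity)
    calc ∑ k ∈ Finset.Icc 1 K, (n : ℝ) ^ (C * (k : ℝ) / (n : ℝ)) *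
            Real.exp (-c * ((min ((k : ℝ) + 1) ((n : ℝ) - (k : ℝ) + 1)) ^ ((1:ℝ)/6) - 1))
        ≤ (Finset.Icc 1 K).card • ((N:ℝ) ^ C * Real.exp c) := Finset.sum_le_card_nsmul _ _ _ hstep
      _ = (K : ℝ) * ((N:ℝ) ^ C * Real.exp c) := by
          rw [Nat.card_Icc, nsmul_eq_mul]; norm_num
      _ ≤ B1 := by
          apply mul_le_mul_of_nonneg_right _ (by positivity)
          exact_mod_cast le_trans hKn hnN.le
      _ ≤ B1 + B2 := by linarith
  · -- large n
    obtain ⟨hc1, hc2⟩ := hN n hnN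
    set g2 : ℝ := Real.exp c * Real.exp (C * Real.log n - c * (Real.log n) ^ ((7:ℝ)/6)) with hg2
    have hg2nn : 0 ≤ g2 := by positivity
    have hstep : ∀ k ∈ Finset.Icc 1 K,
        (n : ℝ) ^ (C * (k : ℝ) / (n : ℝ)) *
            Real.exp (-c * ((min ((k : ℝ) + 1) ((n : ℝ) - (k : ℝ) + 1)) ^ ((1:ℝ)/6) - 1))
          ≤ Real.exp c * D * (1 / (k:ℝ)^2) + g2 := by
      intro k hk
      simp only [Finset.mem_Icc] at hk
      have hk1 : (1:ℝ) ≤ k := by exact_mod_cast hk.1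
      have hkn : (k:ℝ) ≤ n := by exact_mod_cast le_trans hk.2 hKn
      have hrpow : (n : ℝ) ^ (C * (k : ℝ) / (n : ℝ)) = Real.exp (Real.log n * (C * k / n)) :=
        Real.rpow_def_of_pos hn0 _
      rcases le_or_gt (2 * k) n with h2k | h2k
      · -- first half : min = k+1
        have h2k' : (2:ℝ) * k ≤ n := by exact_mod_cast h2k
        have hmin : min ((k : ℝ) + 1) ((n : ℝ) - (k : ℝ) + 1) = (k:ℝ) + 1 :=
          min_eq_left (by linarith)
        -- key : log n * (C k / n) ≤ (c/2) * k^{1/6}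
        have hsplitk : (k:ℝ) = (k:ℝ) ^ ((1:ℝ)/6) * (k:ℝ) ^ ((5:ℝ)/6) := by
          rw [← Real.rpow_add (by linarith : (0:ℝ) < k)]; norm_num
        have hsplitn : (n:ℝ) = (n:ℝ) ^ ((1:ℝ)/6) * (n:ℝ) ^ ((5:ℝ)/6) := by
          rw [← Real.rpow_add hn0]; norm_num
        have hkn56 : (k:ℝ) ^ ((5:ℝ)/6) ≤ (n:ℝ) ^ ((5:ℝ)/6) :=
          Real.rpow_le_rpow (by linarith) hkn (by norm_num)
        have hu : (0:ℝ) ≤ (k:ℝ) ^ ((1:ℝ)/6) := Real.rpow_nonneg (by linarith) _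
        have hv : (0:ℝ) ≤ (k:ℝ) ^ ((5:ℝ)/6) := Real.rpow_nonneg (by linarith) _
        have hs : (0:ℝ) < (n:ℝ) ^ ((1:ℝ)/6) := Real.rpow_pos_of_pos hn0 _
        have ht : (0:ℝ) < (n:ℝ) ^ ((5:ℝ)/6) := Real.rpow_pos_of_pos hn0 _
        have e2 : (k:ℝ)/n ≤ (k:ℝ) ^ ((1:ℝ)/6) / (n:ℝ) ^ ((1:ℝ)/6) := by
          rw [div_le_div_iff₀ hn0 hs]
          calc (k:ℝ) * (n:ℝ) ^ ((1:ℝ)/6)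
              = ((k:ℝ) ^ ((1:ℝ)/6) * (k:ℝ) ^ ((5:ℝ)/6)) * (n:ℝ) ^ ((1:ℝ)/6) := by
                rw [← hsplitk]
            _ ≤ (k:ℝ) ^ ((1:ℝ)/6) * ((n:ℝ) ^ ((1:ℝ)/6) * (n:ℝ) ^ ((5:ℝ)/6)) := by
                nlinarith [mul_le_mul_of_nonneg_left hkn56 (mul_nonneg hu hs.le)]
            _ = (k:ℝ) ^ ((1:ℝ)/6) * (n:ℝ) := by rw [← hsplitn]
        have hkey : Real.log n * (C * k / n) ≤ (c/2) * (k:ℝ) ^ ((1:ℝ)/6) := by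
          calc Real.log n * (C * k / n) = (C * Real.log n) * ((k:ℝ)/n) := by ring
            _ ≤ ((c/2) * (n:ℝ) ^ ((1:ℝ)/6)) * ((k:ℝ) ^ ((1:ℝ)/6) / (n:ℝ) ^ ((1:ℝ)/6)) := by
                apply mul_le_mul hc1 e2 (by positivity) (by positivity)
            _ = (c/2) * (k:ℝ) ^ ((1:ℝ)/6) := by field_simp
        have hmono : (k:ℝ) ^ ((1:ℝ)/6) ≤ ((k:ℝ)+1) ^ ((1:ℝ)/6) :=
          Real.rpow_le_rpow (by linarith) (by linarith) (by norm_num)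
        have hbound : (n : ℝ) ^ (C * (k : ℝ) / (n : ℝ)) *
            Real.exp (-c * ((min ((k : ℝ) + 1) ((n : ℝ) - (k : ℝ) + 1)) ^ ((1:ℝ)/6) - 1))
            ≤ Real.exp c * Real.exp (-((c/2) * (k:ℝ) ^ ((1:ℝ)/6))) := by
          rw [hmin, hrpow, ← Real.exp_add, ← Real.exp_add]
          apply Real.exp_le_exp.2
          have hmono' := mul_le_mul_of_nonneg_left hmono hc.le
          linarith
        have hdecay := aux_decay (c/2) (by positivity) k hk.1
        calc (n : ℝ) ^ (C * (k : ℝ) / (n : ℝ)) *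
            Real.exp (-c * ((min ((k : ℝ) + 1) ((n : ℝ) - (k : ℝ) + 1)) ^ ((1:ℝ)/6) - 1))
            ≤ Real.exp c * Real.exp (-((c/2) * (k:ℝ) ^ ((1:ℝ)/6))) := hbound
          _ ≤ Real.exp c * (D * (1 / (k:ℝ)^2)) :=
              mul_le_mul_of_nonneg_left hdecay (Real.exp_pos _).le
          _ = Real.exp c * D * (1 / (k:ℝ)^2) := by ring
          _ ≤ Real.exp c * D * (1 / (k:ℝ)^2) + g2 := by linarith
      · -- second half : min = n-k+1 ≥ (log n)^7
        have h2k' : (n:ℝ) ≤ 2 * k := by exact_mod_cast h2k.le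
        have hmin : min ((k : ℝ) + 1) ((n : ℝ) - (k : ℝ) + 1) = (n:ℝ) - k + 1 :=
          min_eq_right (by linarith)
        have hfl : (0:ℝ) ≤ (n : ℝ) - Real.log n ^ 7 := by
          by_contra hneg
          push_neg at hneg
          have : K = 0 := Nat.floor_of_nonpos hneg.le
          omega
        have hKle : (K:ℝ) ≤ (n : ℝ) - Real.log n ^ 7 := Nat.floor_le hfl
        have hkK : (k:ℝ) ≤ K := by exact_mod_cast hk.2
        have hm7 : Real.log n ^ 7 ≤ (n:ℝ) - k + 1 := by linarith
        have h7rw : (Real.log n ^ 7 : ℝ) ^ ((1:ℝ)/6) = (Real.log n) ^ ((7:ℝ)/6) := by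
          rw [← Real.rpow_natCast (Real.log n) 7, ← Real.rpow_mul hlog]
          norm_num
        have hm16 : (Real.log n) ^ ((7:ℝ)/6) ≤ ((n:ℝ) - k + 1) ^ ((1:ℝ)/6) := by
          rw [← h7rw]
          exact Real.rpow_le_rpow (by positivity) hm7 (by norm_num)
        have hrle : (n : ℝ) ^ (C * (k : ℝ) / (n : ℝ)) ≤ Real.exp (C * Real.log n) := by
          rw [hrpow]
          apply Real.exp_le_exp.2
          rw [mul_comm (Real.log n)]
          apply mul_le_mul_of_nonneg_right _ hlog
          rw [div_le_iff₀ hn0]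
          have := mul_le_mul_of_nonneg_left hkn hC.le
          linarith
        calc (n : ℝ) ^ (C * (k : ℝ) / (n : ℝ)) *
            Real.exp (-c * ((min ((k : ℝ) + 1) ((n : ℝ) - (k : ℝ) + 1)) ^ ((1:ℝ)/6) - 1))
            ≤ Real.exp (C * Real.log n) *
              Real.exp (-c * (((n:ℝ) - k + 1) ^ ((1:ℝ)/6) - 1)) := by
              rw [hmin]
              exact mul_le_mul_of_nonneg_right hrle (Real.exp_pos _).le
          _ ≤ g2 := by
              rw [hg2, ← Real.exp_add, ← Real.exp_add]
              apply Real.exp_le_exp.2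
              have := mul_le_mul_of_nonneg_left hm16 hc.le
              linarith
          _ ≤ Real.exp c * D * (1 / (k:ℝ)^2) + g2 := by
              have : (0:ℝ) ≤ Real.exp c * D * (1 / (k:ℝ)^2) := by positivity
              linarith
    calc ∑ k ∈ Finset.Icc 1 K, (n : ℝ) ^ (C * (k : ℝ) / (n : ℝ)) *
            Real.exp (-c * ((min ((k : ℝ) + 1) ((n : ℝ) - (k : ℝ) + 1)) ^ ((1:ℝ)/6) - 1))
        ≤ ∑ k ∈ Finset.Icc 1 K, (Real.exp c * D * (1 / (k:ℝ)^2) + g2) :=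
          Finset.sum_le_sum hstep
      _ = Real.exp c * D * (∑ k ∈ Finset.Icc 1 K, (1 / (k:ℝ)^2)) + (K:ℝ) * g2 := by
          rw [Finset.sum_add_distrib, Finset.sum_const, ← Finset.mul_sum, Nat.card_Icc,
            nsmul_eq_mul]
          norm_num
      _ ≤ Real.exp c * D * 2 + Real.exp c := by
          have hsum := aux_sum_inv_sq K
          have hKg2 : (K:ℝ) * g2 ≤ Real.exp c := by
            have hKn' : (K:ℝ) ≤ n := by exact_mod_cast hKn
            have hng2 : (n:ℝ) * g2 ≤ Real.exp c := by
              rw [hg2]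
              nth_rewrite 1 [← Real.exp_log hn0]
              rw [← Real.exp_add, ← Real.exp_add]
              apply Real.exp_le_exp.2
              linarith
            calc (K:ℝ) * g2 ≤ (n:ℝ) * g2 := mul_le_mul_of_nonneg_right hKn' hg2nn
              _ ≤ Real.exp c := hng2
          have := mul_le_mul_of_nonneg_left hsum (by positivity : (0:ℝ) ≤ Real.exp c * D)
          linarith
      _ = B2 := rfl
      _ ≤ B1 + B2 := by linarith
end
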